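/- Let η(s) = 1/2 - s + s², let G = (1/M){0,...,M-1}^d be the discretized torus, and for w : G → ℝ define the periodic energy E_p(w) = ∑_{x,y ∈ G} w(x)w(y)·∏_{k=1}^d η(|x_k - y_k|) and the extreme energy E_e(w) = -2(∑_{x∈G} w(x))·∑_{x∈G} w(x)∏_{k=1}^d x_k(1-x_k) + ∑_{x,y∈G} w(x)w(y)∏_{k=1}^d 2(min(x_k,y_k) - x_k y_k). Then for the constant weight w_r(x) = r/M, the excess E_p(w_r) - E_e(w_r) equals M^{d-2}·(((2M²+1)/(6M))^d + ((M²-1)/(6M))^d)·r². -/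

import Mathlib

open Finset

private lemma habs' (a b : ℝ) : |a - b| = a + b - 2 * min a b := by
  rcases le_total a b with h | h
  · rw [min_eq_left h, abs_of_nonpos (by linarith)]; ring
  · rw [min_eq_right h, abs_of_nonneg (by linarith)]; ring

private lemma sum_poly (a b c : ℝ) (n : ℕ) :
    ∑ k ∈ range n, (a + b * k + c * (k : ℝ) ^ 2)
      = a * n + b * (n * (n - 1) / 2) + c * (n * (n - 1) * (2 * n - 1) / 6) := by
  induction n with
  | zero => simp
  | succ n ih => rw [Finset.sum_range_succ, ih]; push_cast; ring

private lemma sum_poly2 (a b c e f : ℝ) (n : ℕ) :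
    ∑ m ∈ range n, ∑ k ∈ range n,
      (a + b * ((m : ℝ) + k) + c * ((m : ℝ) * k) + e * ((m : ℝ) ^ 2 + (k : ℝ) ^ 2)
        + f * min (m : ℝ) k)
      = a * n ^ 2 + b * (n ^ 2 * (n - 1)) + c * (n * (n - 1) / 2) ^ 2
        + e * (n ^ 2 * (n - 1) * (2 * n - 1) / 3) + f * (n * (n - 1) * (2 * n - 1) / 6) := by
  induction n with
  | zero => simp
  | succ n ih =>
    rw [Finset.sum_range_succ]
    rw [Finset.sum_congr rfl (fun m (_ : m ∈ range n) => Finset.sum_range_succ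
      (fun k => (a + b * ((m : ℝ) + k) + c * ((m : ℝ) * k)
        + e * ((m : ℝ) ^ 2 + (k : ℝ) ^ 2) + f * min (m : ℝ) k)) n)]
    rw [Finset.sum_add_distrib, ih, Finset.sum_range_succ]
    have hcol : ∑ m ∈ range n,
        (a + b * ((m : ℝ) + n) + c * ((m : ℝ) * n) + e * ((m : ℝ) ^ 2 + (n : ℝ) ^ 2)
          + f * min (m : ℝ) n)
        = (a + b * n + e * (n : ℝ) ^ 2) * n + (b + c * n + f) * (n * (n - 1) / 2)
          + e * (n * (n - 1) * (2 * n - 1) / 6) := by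
      rw [Finset.sum_congr rfl (fun m hm => ?_), sum_poly]
      have hm' : (m : ℝ) ≤ n := by exact_mod_cast (mem_range.mp hm).le
      rw [min_eq_left hm']; ring
    have hrow : ∑ k ∈ range n,
        (a + b * ((n : ℝ) + k) + c * ((n : ℝ) * k) + e * ((n : ℝ) ^ 2 + (k : ℝ) ^ 2)
          + f * min (n : ℝ) k)
        = (a + b * n + e * (n : ℝ) ^ 2) * n + (b + c * n + f) * (n * (n - 1) / 2)
          + e * (n * (n - 1) * (2 * n - 1) / 6) := by
      rw [Finset.sum_congr rfl (fun k hk => ?_), sum_poly]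
      have hk' : (k : ℝ) ≤ n := by exact_mod_cast (mem_range.mp hk).le
      rw [min_eq_right hk']; ring
    rw [hcol, hrow, min_self]
    push_cast; ring

private lemma fin2range (M : ℕ) (f : ℕ → ℕ → ℝ) :
    ∑ m : Fin M, ∑ n : Fin M, f m n = ∑ m ∈ range M, ∑ n ∈ range M, f m n := by
  rw [Fin.sum_univ_eq_sum_range (fun m => ∑ n : Fin M, f m n)]
  exact Finset.sum_congr rfl fun m _ => Fin.sum_univ_eq_sum_range (fun n => f m n) M

private lemma fact0 {d M : ℕ} (h : Fin d → Fin M → ℝ) :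
    ∑ x : Fin d → Fin M, ∏ k, h k (x k) = ∏ k, ∑ m : Fin M, h k m := by
  rw [← Finset.sum_prod_piFinset, Fintype.piFinset_univ]

private lemma fact1 {d M : ℕ} (g : Fin M → ℝ) :
    ∑ x : Fin d → Fin M, ∏ k, g (x k) = (∑ m : Fin M, g m) ^ d := by
  rw [fact0 (fun _ m => g m), Finset.prod_const, Finset.card_univ, Fintype.card_fin]

private lemma fact2 {d M : ℕ} (f : Fin M → Fin M → ℝ) :
    ∑ x : Fin d → Fin M, ∑ y : Fin d → Fin M, ∏ k, f (x k) (y k)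
      = (∑ m : Fin M, ∑ n : Fin M, f m n) ^ d := by
  rw [Finset.sum_congr rfl (fun x _ => fact0 (fun k n => f (x k) n))]
  exact fact1 (fun m => ∑ n : Fin M, f m n)

theorem stmt_7 (M d : ℕ) (hM : 0 < M) (hd : 2 ≤ d) (r : ℝ) :
    (∑ x : Fin d → Fin M, ∑ y : Fin d → Fin M,
        (r / M) * (r / M) *
          ∏ k : Fin d,
            ((1 : ℝ) / 2 - |(x k : ℝ) / M - (y k : ℝ) / M| +
              |(x k : ℝ) / M - (y k : ℝ) / M| ^ 2)) -
      (-2 * (∑ _x : Fin d → Fin M, (r / M)) *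
          (∑ x : Fin d → Fin M,
            (r / M) * ∏ k : Fin d, ((x k : ℝ) / M * (1 - (x k : ℝ) / M))) +
        ∑ x : Fin d → Fin M, ∑ y : Fin d → Fin M,
          (r / M) * (r / M) *
            ∏ k : Fin d,
              2 * (min ((x k : ℝ) / M) ((y k : ℝ) / M) -
                (x k : ℝ) / M * ((y k : ℝ) / M))) =
      (M : ℝ) ^ (d - 2) *
        (((2 * (M : ℝ) ^ 2 + 1) / (6 * M)) ^ d + (((M : ℝ) ^ 2 - 1) / (6 * M)) ^ d) *
        r ^ 2 := by
  have hN : (0 : ℝ) < M := by exact_mod_cast hM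
  have hN' : (M : ℝ) ≠ 0 := hN.ne'
  -- one-dimensional sums
  have hA : (∑ m : Fin M, ∑ n : Fin M,
      ((1 : ℝ) / 2 - |(m : ℝ) / M - (n : ℝ) / M| + |(m : ℝ) / M - (n : ℝ) / M| ^ 2))
      = (2 * (M : ℝ) ^ 2 + 1) / 6 := by
    rw [fin2range M (fun m n => (1 : ℝ) / 2 - |(m : ℝ) / M - (n : ℝ) / M|
      + |(m : ℝ) / M - (n : ℝ) / M| ^ 2)]
    have key : ∀ m n : ℕ, ((1 : ℝ) / 2 - |(m : ℝ) / M - (n : ℝ) / M|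
        + |(m : ℝ) / M - (n : ℝ) / M| ^ 2)
        = (1 / 2 : ℝ) + (-(1 / (M : ℝ))) * ((m : ℝ) + n) + (-(2 / (M : ℝ) ^ 2)) * ((m : ℝ) * n)
          + (1 / (M : ℝ) ^ 2) * ((m : ℝ) ^ 2 + (n : ℝ) ^ 2) + (2 / (M : ℝ)) * min (m : ℝ) n := by
      intro m n
      rw [sq_abs, habs', min_div_div_right hN.le]
      field_simp
      ring
    rw [Finset.sum_congr rfl fun m _ => Finset.sum_congr rfl fun n _ => key m n, sum_poly2]
    field_simp
    ring
  have hC : (∑ m : Fin M, ∑ n : Fin M,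
      (2 * (min ((m : ℝ) / M) ((n : ℝ) / M) - (m : ℝ) / M * ((n : ℝ) / M))))
      = ((M : ℝ) ^ 2 - 1) / 6 := by
    rw [fin2range M (fun m n => 2 * (min ((m : ℝ) / M) ((n : ℝ) / M)
      - (m : ℝ) / M * ((n : ℝ) / M)))]
    have key : ∀ m n : ℕ, (2 * (min ((m : ℝ) / M) ((n : ℝ) / M) - (m : ℝ) / M * ((n : ℝ) / M)))
        = (0 : ℝ) + 0 * ((m : ℝ) + n) + (-(2 / (M : ℝ) ^ 2)) * ((m : ℝ) * n)
          + 0 * ((m : ℝ) ^ 2 + (n : ℝ) ^ 2) + (2 / (M : ℝ)) * min (m : ℝ) n := by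
      intro m n
      rw [min_div_div_right hN.le]
      field_simp
      ring
    rw [Finset.sum_congr rfl fun m _ => Finset.sum_congr rfl fun n _ => key m n, sum_poly2]
    field_simp
    ring
  have hB : (∑ m : Fin M, ((m : ℝ) / M * (1 - (m : ℝ) / M)))
      = ((M : ℝ) ^ 2 - 1) / (6 * M) := by
    rw [Fin.sum_univ_eq_sum_range (fun m => ((m : ℝ) / M * (1 - (m : ℝ) / M))) M]
    have key : ∀ m : ℕ, ((m : ℝ) / M * (1 - (m : ℝ) / M))
        = (0 : ℝ) + (1 / (M : ℝ)) * m + (-(1 / (M : ℝ) ^ 2)) * (m : ℝ) ^ 2 := by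
      intro m; field_simp; ring
    rw [Finset.sum_congr rfl fun m _ => key m, sum_poly]
    field_simp
    ring
  simp only [← Finset.mul_sum]
  rw [fact2 (fun m n => (1 : ℝ) / 2 - |(m : ℝ) / M - (n : ℝ) / M|
      + |(m : ℝ) / M - (n : ℝ) / M| ^ 2),
    fact2 (fun m n => 2 * (min ((m : ℝ) / M) ((n : ℝ) / M) - (m : ℝ) / M * ((n : ℝ) / M))),
    fact1 (fun m => ((m : ℝ) / M * (1 - (m : ℝ) / M))), hA, hB, hC,
    Finset.sum_const, Finset.card_univ]
  obtain ⟨e, rfl⟩ : ∃ e, d = e + 2 := ⟨d - 2, (Nat.sub_add_cancel hd).symm⟩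
  simp only [Fintype.card_fun, Fintype.card_fin, nsmul_eq_mul, Nat.cast_pow,
    Nat.add_sub_cancel]
  simp only [div_pow, mul_pow]
  field_simp
  ring
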